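/- For finite-valued random variables X1 and X2, if there exists a random variable W with W = g1(X1) = g2(X2) almost surely and I(X1; X2 | W) = 0, then W computes every common function of X1 and X2: for any f1, f2 with f1(X1) = f2(X2) almost surely there exists f such that f(W) = f1(X1) almost surely. -/
import Mathlib


open Real
open scoped BigOperators Classical

/-- The distribution (pushforward pmf) of a random variable `X` under the weight
function `p` on a finite sample space. -/
noncomputable def dist {Ω S : Type*} [Fintype Ω] (p : Ω → ℝ) (X : Ω → S) (s : S) : ℝ :=
  ∑ ω : Ω, if X ω = s then p ω else 0

/-- Shannon entropy of a finite-valued random variable. -/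
noncomputable def ent {Ω S : Type*} [Fintype Ω] [Fintype S] (p : Ω → ℝ) (X : Ω → S) : ℝ :=
  -∑ s : S, dist p X s * Real.log (dist p X s)

/-- Shannon conditional entropy `H(X | Y)`, via the chain rule. -/
noncomputable def condEnt {Ω S T : Type*} [Fintype Ω] [Fintype S] [Fintype T]
    (p : Ω → ℝ) (X : Ω → S) (Y : Ω → T) : ℝ :=
  ent p (fun ω => (X ω, Y ω)) - ent p Y

/-- Shannon mutual information `I(X; Y)`. -/
noncomputable def mutInfo {Ω S T : Type*} [Fintype Ω] [Fintype S] [Fintype T]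
    (p : Ω → ℝ) (X : Ω → S) (Y : Ω → T) : ℝ :=
  ent p X + ent p Y - ent p (fun ω => (X ω, Y ω))

/-- Conditional mutual information `I(X; Y | Z)`. -/
noncomputable def condMutInfo {Ω S T V : Type*} [Fintype Ω] [Fintype S] [Fintype T] [Fintype V]
    (p : Ω → ℝ) (X : Ω → S) (Y : Ω → T) (Z : Ω → V) : ℝ :=
  ent p (fun ω => (X ω, Z ω)) + ent p (fun ω => (Y ω, Z ω))
    - ent p (fun ω => (X ω, Y ω, Z ω)) - ent p Z

/-- `p` is a probability mass function on the finite sample space. -/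
def IsPMF {Ω : Type*} [Fintype Ω] (p : Ω → ℝ) : Prop :=
  (∀ ω, 0 ≤ p ω) ∧ ∑ ω : Ω, p ω = 1

/-- Equality `p`-almost surely. -/
def AEEq {Ω S : Type*} (p : Ω → ℝ) (f g : Ω → S) : Prop :=
  ∀ ω, p ω ≠ 0 → f ω = g ω

/-- Kullback–Leibler divergence between two pmfs on a finite type. -/
noncomputable def klDiv {A : Type*} [Fintype A] (q r : A → ℝ) : ℝ :=
  ∑ a : A, q a * Real.log (q a / r a)

section Aux

set_option linter.unusedSectionVars false
variable {Ω S1 S2 SW : Type} [Fintype Ω] [Fintype S1] [Fintype S2] [Fintype SW]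

lemma my_dist_nonneg (p : Ω → ℝ) (hp : ∀ ω, 0 ≤ p ω) {S : Type} (X : Ω → S) (s : S) :
    0 ≤ _root_.dist p X s :=
  Finset.sum_nonneg fun ω _ => by by_cases h : X ω = s <;> simp [h, hp ω]

lemma my_sum_dist (p : Ω → ℝ) {S : Type} [Fintype S] (X : Ω → S) :
    ∑ s : S, _root_.dist p X s = ∑ ω : Ω, p ω := by
  unfold _root_.dist
  rw [Finset.sum_comm]
  exact Finset.sum_congr rfl fun ω _ => by simp

lemma marg13 (p : Ω → ℝ) (X1 : Ω → S1) (X2 : Ω → S2) (W : Ω → SW) (x1 : S1) (w : SW) :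
    _root_.dist p (fun ω => (X1 ω, W ω)) (x1, w)
      = ∑ x2 : S2, _root_.dist p (fun ω => (X1 ω, X2 ω, W ω)) (x1, x2, w) := by
  unfold _root_.dist
  rw [Finset.sum_comm]
  refine Finset.sum_congr rfl fun ω _ => ?_
  by_cases h1 : X1 ω = x1 <;> by_cases h2 : W ω = w <;>
    simp [Prod.ext_iff, h1, h2]

lemma marg23 (p : Ω → ℝ) (X1 : Ω → S1) (X2 : Ω → S2) (W : Ω → SW) (x2 : S2) (w : SW) :
    _root_.dist p (fun ω => (X2 ω, W ω)) (x2, w)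
      = ∑ x1 : S1, _root_.dist p (fun ω => (X1 ω, X2 ω, W ω)) (x1, x2, w) := by
  unfold _root_.dist
  rw [Finset.sum_comm]
  refine Finset.sum_congr rfl fun ω _ => ?_
  by_cases h1 : X2 ω = x2 <;> by_cases h2 : W ω = w <;>
    simp [Prod.ext_iff, h1, h2]

lemma margPair {S : Type} [Fintype S] (p : Ω → ℝ) (X : Ω → S) (W : Ω → SW) (w : SW) :
    _root_.dist p W w = ∑ s : S, _root_.dist p (fun ω => (X ω, W ω)) (s, w) := by
  unfold _root_.dist
  rw [Finset.sum_comm]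
  refine Finset.sum_congr rfl fun ω _ => ?_
  by_cases h2 : W ω = w <;> simp [Prod.ext_iff, h2, Finset.sum_ite_eq]

lemma margW (p : Ω → ℝ) (X1 : Ω → S1) (X2 : Ω → S2) (W : Ω → SW) (w : SW) :
    _root_.dist p W w
      = ∑ x1 : S1, ∑ x2 : S2, _root_.dist p (fun ω => (X1 ω, X2 ω, W ω)) (x1, x2, w) := by
  rw [margPair p X1 W w]
  exact Finset.sum_congr rfl fun x1 _ => marg13 p X1 X2 W x1 w

end Aux

lemma sum3_comm {α β γ M : Type*} [Fintype α] [Fintype β] [Fintype γ] [AddCommMonoid M]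
    (f : α → β → γ → M) :
    ∑ a : α, ∑ b : β, ∑ c : γ, f a b c = ∑ b : β, ∑ c : γ, ∑ a : α, f a b c := by
  rw [Finset.sum_comm]
  exact Finset.sum_congr rfl fun b _ => Finset.sum_comm

lemma sum3_comm23 {α β γ M : Type*} [Fintype α] [Fintype β] [Fintype γ] [AddCommMonoid M]
    (f : α → β → γ → M) :
    ∑ a : α, ∑ b : β, ∑ c : γ, f a b c = ∑ a : α, ∑ c : γ, ∑ b : β, f a b c :=
  Finset.sum_congr rfl fun a _ => Finset.sum_comm

lemma gibbs_pointwise {q b : ℝ} (hq : 0 ≤ q) (hb : 0 ≤ b) (hbpos : q ≠ 0 → 0 < b) :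
    0 ≤ b - q + q * Real.log (q / b) ∧ (b - q + q * Real.log (q / b) = 0 → q = b) := by
  by_cases hq0 : q = 0
  · subst hq0
    constructor
    · simpa using hb
    · intro h; simpa using h.symm
  · have hqpos : 0 < q := lt_of_le_of_ne hq (Ne.symm hq0)
    have hbp : 0 < b := hbpos hq0
    have hlog : Real.log (q / b) = -Real.log (b / q) := by
      rw [← Real.log_inv]
      congr 1
      field_simp
    have hmul : q * (b / q) = b := by field_simp
    constructor
    · have key : Real.log (b / q) ≤ b / q - 1 :=
        Real.log_le_sub_one_of_pos (div_pos hbp hqpos)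
      rw [hlog]
      nlinarith [key, hqpos, hmul]
    · intro h
      by_contra hne
      have hne1 : b / q ≠ 1 := by
        intro h1
        apply hne
        have : b = q := by
          field_simp at h1
          linarith
        exact this.symm
      have key2 : Real.log (b / q) < b / q - 1 :=
        Real.log_lt_sub_one_of_pos (div_pos hbp hqpos) hne1
      rw [hlog] at h
      nlinarith [key2, hqpos, hmul]

theorem stmt16 {Ω S1 S2 SW : Type} [Fintype Ω] [Fintype S1] [Fintype S2] [Fintype SW]
    (p : Ω → ℝ) (hp : IsPMF p) (X1 : Ω → S1) (X2 : Ω → S2)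
    (W : Ω → SW) (g1 : S1 → SW) (g2 : S2 → SW)
    (hW1 : AEEq p W (fun ω => g1 (X1 ω)))
    (hW2 : AEEq p W (fun ω => g2 (X2 ω)))
    (hci : condMutInfo p X1 X2 W = 0) :
    ∀ (T : Type) [Fintype T] (f1 : S1 → T) (f2 : S2 → T),
      AEEq p (fun ω => f1 (X1 ω)) (fun ω => f2 (X2 ω)) →
      ∃ f : SW → T, AEEq p (fun ω => f (W ω)) (fun ω => f1 (X1 ω)) := by
  classical
  intro T _ f1 f2 hf
  obtain ⟨hp0, hp1⟩ := hp
  set q : S1 × S2 × SW → ℝ := _root_.dist p (fun ω => (X1 ω, X2 ω, W ω)) with hq_def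
  set mW : SW → ℝ := _root_.dist p W with hmW_def
  set m13 : S1 × SW → ℝ := _root_.dist p (fun ω => (X1 ω, W ω)) with hm13_def
  set m23 : S2 × SW → ℝ := _root_.dist p (fun ω => (X2 ω, W ω)) with hm23_def
  have hqnn : ∀ a, 0 ≤ q a := fun a => my_dist_nonneg p hp0 _ a
  have hmWnn : ∀ w, 0 ≤ mW w := fun w => my_dist_nonneg p hp0 _ w
  have hm13nn : ∀ s, 0 ≤ m13 s := fun s => my_dist_nonneg p hp0 _ s
  have hm23nn : ∀ s, 0 ≤ m23 s := fun s => my_dist_nonneg p hp0 _ s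
  have hmarg13 : ∀ x1 w, m13 (x1, w) = ∑ x2 : S2, q (x1, x2, w) :=
    fun x1 w => marg13 p X1 X2 W x1 w
  have hmarg23 : ∀ x2 w, m23 (x2, w) = ∑ x1 : S1, q (x1, x2, w) :=
    fun x2 w => marg23 p X1 X2 W x2 w
  have hmargW1 : ∀ w, mW w = ∑ x1 : S1, m13 (x1, w) := fun w => margPair p X1 W w
  have hmargW2 : ∀ w, mW w = ∑ x2 : S2, m23 (x2, w) := fun w => margPair p X2 W w
  have hq_le_13 : ∀ x1 x2 w, q (x1, x2, w) ≤ m13 (x1, w) := by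
    intro x1 x2 w
    rw [hmarg13]
    exact Finset.single_le_sum (f := fun y => q (x1, y, w)) (fun i _ => hqnn _) (Finset.mem_univ x2)
  have hq_le_23 : ∀ x1 x2 w, q (x1, x2, w) ≤ m23 (x2, w) := by
    intro x1 x2 w
    rw [hmarg23]
    exact Finset.single_le_sum (f := fun y => q (y, x2, w)) (fun i _ => hqnn _) (Finset.mem_univ x1)
  have hm13_le_W : ∀ x1 w, m13 (x1, w) ≤ mW w := by
    intro x1 w
    rw [hmargW1]
    exact Finset.single_le_sum (f := fun y => m13 (y, w)) (fun i _ => hm13nn _) (Finset.mem_univ x1)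
  have hq_le_W : ∀ x1 x2 w, q (x1, x2, w) ≤ mW w :=
    fun x1 x2 w => le_trans (hq_le_13 x1 x2 w) (hm13_le_W x1 w)
  -- the "conditionally independent coupling" b
  set b : S1 × S2 × SW → ℝ :=
    fun a => if mW a.2.2 = 0 then 0 else m13 (a.1, a.2.2) * m23 (a.2.1, a.2.2) / mW a.2.2
    with hb_def
  have hbnn : ∀ a, 0 ≤ b a := by
    intro a
    simp only [hb_def]
    split
    · exact le_refl 0
    · exact div_nonneg (mul_nonneg (hm13nn _) (hm23nn _)) (hmWnn _)
  have hbpos : ∀ a, q a ≠ 0 → 0 < b a := by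
    rintro ⟨x1, x2, w⟩ hqa
    have hqa' : 0 < q (x1, x2, w) := (hqnn _).lt_of_ne (Ne.symm hqa)
    have h13 : 0 < m13 (x1, w) := lt_of_lt_of_le hqa' (hq_le_13 x1 x2 w)
    have h23 : 0 < m23 (x2, w) := lt_of_lt_of_le hqa' (hq_le_23 x1 x2 w)
    have hW : 0 < mW w := lt_of_lt_of_le hqa' (hq_le_W x1 x2 w)
    simp only [hb_def]
    rw [if_neg (ne_of_gt hW)]
    exact div_pos (mul_pos h13 h23) hW
  have hsumq : ∑ a : S1 × S2 × SW, q a = 1 := by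
    rw [hq_def, my_sum_dist, hp1]
  have hsumW : ∑ w : SW, mW w = 1 := by
    rw [hmW_def, my_sum_dist, hp1]
  have hbslice : ∀ w : SW, ∑ x1 : S1, ∑ x2 : S2, b (x1, x2, w) = mW w := by
    intro w
    by_cases hw : mW w = 0
    · simp [hb_def, hw]
    · simp only [hb_def, if_neg hw]
      have inner : ∀ x1 : S1,
          ∑ x2 : S2, m13 (x1, w) * m23 (x2, w) / mW w = m13 (x1, w) := by
        intro x1
        have h1 : ∑ x2 : S2, m13 (x1, w) * m23 (x2, w) / mW w
            = (m13 (x1, w) / mW w) * ∑ x2 : S2, m23 (x2, w) := by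
          rw [Finset.mul_sum]
          exact Finset.sum_congr rfl fun x2 _ => by ring
        rw [h1, ← hmargW2, div_mul_cancel₀ _ hw]
      simp only [inner]
      exact (hmargW1 w).symm
  have hsumb : ∑ a : S1 × S2 × SW, b a = 1 := by
    have h1 : ∑ a : S1 × S2 × SW, b a = ∑ x1 : S1, ∑ x2 : S2, ∑ w : SW, b (x1, x2, w) := by
      simp only [Fintype.sum_prod_type]
    rw [h1, sum3_comm, sum3_comm]
    simp only [hbslice]
    exact hsumW
  -- expanding the conditional mutual information
  have e13 : ∑ s : S1 × SW, m13 s * Real.log (m13 s)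
      = ∑ a : S1 × S2 × SW, q a * Real.log (m13 (a.1, a.2.2)) := by
    simp only [Fintype.sum_prod_type]
    rw [sum3_comm23]
    refine Finset.sum_congr rfl fun x1 _ => Finset.sum_congr rfl fun w _ => ?_
    rw [← Finset.sum_mul, ← hmarg13]
  have e23 : ∑ s : S2 × SW, m23 s * Real.log (m23 s)
      = ∑ a : S1 × S2 × SW, q a * Real.log (m23 (a.2.1, a.2.2)) := by
    simp only [Fintype.sum_prod_type]
    rw [sum3_comm]
    refine Finset.sum_congr rfl fun x2 _ => Finset.sum_congr rfl fun w _ => ?_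
    rw [← Finset.sum_mul, ← hmarg23]
  have eW : ∑ w : SW, mW w * Real.log (mW w)
      = ∑ a : S1 × S2 × SW, q a * Real.log (mW a.2.2) := by
    simp only [Fintype.sum_prod_type]
    rw [sum3_comm, sum3_comm]
    refine Finset.sum_congr rfl fun w _ => ?_
    have h1 : ∀ x1 : S1, ∑ x2 : S2, q (x1, x2, w) * Real.log (mW w)
        = m13 (x1, w) * Real.log (mW w) := by
      intro x1
      rw [← Finset.sum_mul, ← hmarg13]
    simp only [h1]
    rw [← Finset.sum_mul, ← hmargW1]
  have hCMI : condMutInfo p X1 X2 W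
      = ∑ a : S1 × S2 × SW,
          (q a * Real.log (q a) + q a * Real.log (mW a.2.2)
            - q a * Real.log (m13 (a.1, a.2.2)) - q a * Real.log (m23 (a.2.1, a.2.2))) := by
    unfold condMutInfo ent
    rw [← hq_def, ← hm13_def, ← hm23_def, ← hmW_def]
    rw [e13, e23, eW]
    rw [Finset.sum_sub_distrib, Finset.sum_sub_distrib, Finset.sum_add_distrib]
    ring
  have pointwise : ∀ a : S1 × S2 × SW,
      q a * Real.log (q a / b a)
        = q a * Real.log (q a) + q a * Real.log (mW a.2.2)
          - q a * Real.log (m13 (a.1, a.2.2)) - q a * Real.log (m23 (a.2.1, a.2.2)) := by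
    rintro ⟨x1, x2, w⟩
    by_cases hqa : q (x1, x2, w) = 0
    · rw [hqa]; ring
    · have hqa' : 0 < q (x1, x2, w) := (hqnn _).lt_of_ne (Ne.symm hqa)
      have h13 : 0 < m13 (x1, w) := lt_of_lt_of_le hqa' (hq_le_13 x1 x2 w)
      have h23 : 0 < m23 (x2, w) := lt_of_lt_of_le hqa' (hq_le_23 x1 x2 w)
      have hW : 0 < mW w := lt_of_lt_of_le hqa' (hq_le_W x1 x2 w)
      have hb_eq : b (x1, x2, w) = m13 (x1, w) * m23 (x2, w) / mW w := by
        simp only [hb_def]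
        rw [if_neg (ne_of_gt hW)]
      rw [hb_eq, Real.log_div hqa (by positivity),
        Real.log_div (by positivity) (ne_of_gt hW),
        Real.log_mul (ne_of_gt h13) (ne_of_gt h23)]
      ring
  have hKL : ∑ a : S1 × S2 × SW, q a * Real.log (q a / b a) = 0 := by
    have h1 := hci
    rw [hCMI] at h1
    calc ∑ a : S1 × S2 × SW, q a * Real.log (q a / b a)
        = ∑ a : S1 × S2 × SW,
            (q a * Real.log (q a) + q a * Real.log (mW a.2.2)
              - q a * Real.log (m13 (a.1, a.2.2)) - q a * Real.log (m23 (a.2.1, a.2.2))) :=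
          Finset.sum_congr rfl fun a _ => pointwise a
      _ = 0 := h1
  have hDsum : ∑ a : S1 × S2 × SW, (b a - q a + q a * Real.log (q a / b a)) = 0 := by
    rw [Finset.sum_add_distrib, Finset.sum_sub_distrib, hsumb, hsumq, hKL]
    ring
  have hqb : ∀ a, q a = b a := by
    intro a
    have h0 := (Finset.sum_eq_zero_iff_of_nonneg
      (fun a _ => (gibbs_pointwise (hqnn a) (hbnn a) (hbpos a)).1)).mp hDsum a (Finset.mem_univ a)
    exact (gibbs_pointwise (hqnn a) (hbnn a) (hbpos a)).2 h0
  -- pointwise conditional independence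
  have key : ∀ x1 x2 w, q (x1, x2, w) * mW w = m13 (x1, w) * m23 (x2, w) := by
    intro x1 x2 w
    by_cases hw : mW w = 0
    · have h13 : m13 (x1, w) = 0 :=
        le_antisymm (hw ▸ hm13_le_W x1 w) (hm13nn _)
      rw [hw, h13]; ring
    · have h := hqb (x1, x2, w)
      simp only [hb_def, if_neg hw] at h
      rw [h]
      field_simp
  -- existence of a positive-probability sample point
  have hω0 : ∃ ω0 : Ω, p ω0 ≠ 0 := by
    by_contra h
    push_neg at h
    have : ∑ ω : Ω, p ω = 0 := Finset.sum_eq_zero fun ω _ => h ω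
    rw [hp1] at this
    exact one_ne_zero this
  obtain ⟨ω0, hpω0⟩ := hω0
  -- extracting sample points from positive joint probabilities
  have hq_exists : ∀ x1 x2 w, q (x1, x2, w) ≠ 0 →
      ∃ ω, p ω ≠ 0 ∧ X1 ω = x1 ∧ X2 ω = x2 := by
    intro x1 x2 w hqa
    rw [hq_def] at hqa
    unfold _root_.dist at hqa
    obtain ⟨ω, _, hterm⟩ := Finset.exists_ne_zero_of_sum_ne_zero hqa
    by_cases hc : (X1 ω, X2 ω, W ω) = (x1, x2, w)
    · rw [if_pos hc] at hterm
      have h := Prod.ext_iff.mp hc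
      exact ⟨ω, hterm, h.1, (Prod.ext_iff.mp h.2).1⟩
    · rw [if_neg hc] at hterm
      exact absurd rfl hterm
  -- the common function
  set F : SW → T := fun w => if h : ∃ x1, m13 (x1, w) ≠ 0 then f1 h.choose else f1 (X1 ω0)
    with hF_def
  have claim : ∀ w x1, m13 (x1, w) ≠ 0 → F w = f1 x1 := by
    intro w x1 h13
    have hex : ∃ y, m13 (y, w) ≠ 0 := ⟨x1, h13⟩
    have h13' : m13 (hex.choose, w) ≠ 0 := hex.choose_spec
    have hFw : F w = f1 hex.choose := by
      rw [hF_def]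
      exact dif_pos hex
    rw [hFw]
    have hmw : mW w ≠ 0 := by
      intro hw
      exact h13 (le_antisymm (hw ▸ hm13_le_W x1 w) (hm13nn _))
    have hex2 : ∃ x2, m23 (x2, w) ≠ 0 := by
      by_contra hno
      push_neg at hno
      apply hmw
      rw [hmargW2]
      exact Finset.sum_eq_zero fun x2 _ => hno x2
    obtain ⟨x2, h23⟩ := hex2
    have common : ∀ y, m13 (y, w) ≠ 0 → f1 y = f2 x2 := by
      intro y hy
      have hqy : q (y, x2, w) ≠ 0 := by
        intro h0
        have hk := key y x2 w
        rw [h0, zero_mul] at hk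
        rcases mul_eq_zero.mp hk.symm with h | h
        · exact hy h
        · exact h23 h
      obtain ⟨ω, hpω, hX1, hX2⟩ := hq_exists y x2 w hqy
      have := hf ω hpω
      simp only at this
      rw [hX1, hX2] at this
      exact this
    rw [common _ h13', common _ h13]
  refine ⟨F, fun ω hω => ?_⟩
  have hm : m13 (X1 ω, W ω) ≠ 0 := by
    have hge : p ω ≤ m13 (X1 ω, W ω) := by
      rw [hm13_def]
      unfold _root_.dist
      have := Finset.single_le_sum
        (f := fun ω' => if (X1 ω', W ω') = (X1 ω, W ω) then p ω' else 0)
        (fun ω' _ => by by_cases h : (X1 ω', W ω') = (X1 ω, W ω) <;> simp [h, hp0 ω'])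
        (Finset.mem_univ ω)
      simpa using this
    intro h0
    rw [h0] at hge
    exact hω (le_antisymm hge (hp0 ω))
  exact claim (W ω) (X1 ω) hm
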